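/- Let p and q be odd integers with p, q ≥ 5, and let G(p,q) be the presented group on generators A,B,C with relators A^p, B^q, (AB)^2, (BC)^2, (CA)^2, and C^{-1}(A^2B^2)^2. Then C^5 = 1 holds in G(p,q). -/

import Mathlib

/-- The relators of the group `G(p,q)` on generators `A = of 0`, `B = of 1`, `C = of 2`,
with relators `A^p, B^q, (AB)^2, (BC)^2, (CA)^2, C⁻¹(A²B²)²`. -/
def GRels (p q : ℤ) : Set (FreeGroup (Fin 3)) :=
  let A : FreeGroup (Fin 3) := FreeGroup.of 0
  let B : FreeGroup (Fin 3) := FreeGroup.of 1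
  let C : FreeGroup (Fin 3) := FreeGroup.of 2
  { A ^ p, B ^ q, (A * B) ^ 2, (B * C) ^ 2, (C * A) ^ 2, C⁻¹ * (A ^ 2 * B ^ 2) ^ 2 }

/-- In the group `G(p,q) = ⟨A,B,C ∣ Aᵖ, B^q, (AB)², (BC)², (CA)², C = (A²B²)²⟩`
with `p,q` odd and `p,q ≥ 5`, the relation `C⁵ = 1` holds. -/
theorem C_pow_five_eq_one (p q : ℤ) (hp : Odd p) (hq : Odd q)
    (hp5 : 5 ≤ p) (hq5 : 5 ≤ q) :
    (PresentedGroup.of 2 : PresentedGroup (GRels p q)) ^ 5 = 1 := by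
  -- notation
  set G := PresentedGroup (GRels p q) with hG
  let a : G := PresentedGroup.of 0
  let b : G := PresentedGroup.of 1
  let c : G := PresentedGroup.of 2
  -- every relator maps to 1
  have key : ∀ r ∈ GRels p q, (QuotientGroup.mk r : G) = 1 := fun r hr =>
    (QuotientGroup.eq_one_iff r).mpr (Subgroup.subset_normalClosure hr)
  have hmk : ∀ i : Fin 3, (QuotientGroup.mk (FreeGroup.of i) : G) = PresentedGroup.of i :=
    fun i => rfl
  have h3 : (a * b) ^ 2 = 1 := by
    have := key ((FreeGroup.of 0 * FreeGroup.of 1) ^ 2) (by simp [GRels])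
    simp [QuotientGroup.mk_pow, QuotientGroup.mk_mul, hmk] at this; exact this
  have h4 : (b * c) ^ 2 = 1 := by
    have := key ((FreeGroup.of 1 * FreeGroup.of 2) ^ 2) (by simp [GRels])
    simp [QuotientGroup.mk_pow, QuotientGroup.mk_mul, hmk] at this; exact this
  have h5 : (c * a) ^ 2 = 1 := by
    have := key ((FreeGroup.of 2 * FreeGroup.of 0) ^ 2) (by simp [GRels])
    simp [QuotientGroup.mk_pow, QuotientGroup.mk_mul, hmk] at this; exact this
  have h6 : c⁻¹ * (a ^ 2 * b ^ 2) ^ 2 = 1 := by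
    have := key ((FreeGroup.of 2)⁻¹ * ((FreeGroup.of 0) ^ 2 * (FreeGroup.of 1) ^ 2) ^ 2)
      (by simp [GRels])
    simp [QuotientGroup.mk_pow, QuotientGroup.mk_mul, QuotientGroup.mk_inv, hmk] at this; exact this
  -- abbreviations
  set d : G := a * b with hd_def
  set e : G := a ^ 2 * b ^ 2 with he_def
  have hd : d * d = 1 := by rw [← pow_two]; exact h3
  have hdinv : d⁻¹ = d := inv_eq_of_mul_eq_one_right hd
  have h6' : c = e ^ 2 := by
    have : c * (c⁻¹ * e ^ 2) = c * 1 := by rw [h6]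
    symm
    simpa [mul_assoc] using this
  have h4' : b * c * b = c⁻¹ := by
    have h : b * c * (b * c) = 1 := by rw [← pow_two]; exact h4
    have := congrArg (· * c⁻¹) h
    simpa [mul_assoc] using this
  have h5' : c * a * c = a⁻¹ := by
    have h : c * a * (c * a) = 1 := by rw [← pow_two]; exact h5
    have := congrArg (· * a⁻¹) h
    simpa [mul_assoc] using this
  have he : e = a * d * a⁻¹ * d := by rw [he_def, hd_def, pow_two, pow_two]; group
  have hded : d * e * d = e⁻¹ := by
    calc d * e * d = d * (a * d * a⁻¹ * d) * d := by rw [he]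
      _ = d * (a * d * a⁻¹) * (d * d) := by group
      _ = d * (a * d * a⁻¹) * 1 := by rw [hd]
      _ = d⁻¹ * a * d⁻¹ * a⁻¹ := by rw [hdinv]; group
      _ = (a * d * a⁻¹ * d)⁻¹ := by group
      _ = e⁻¹ := by rw [← he]
  have hdcd : d * c * d = c⁻¹ := by
    calc d * c * d = d * (e * e) * d := by rw [h6', pow_two]
      _ = (d * e * d) * (d⁻¹ * d⁻¹) * (d * e * d) := by group
      _ = e⁻¹ * (d * d) * e⁻¹ := by rw [hdinv, hded]
      _ = e⁻¹ * 1 * e⁻¹ := by rw [hd]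
      _ = (e * e)⁻¹ := by group
      _ = c⁻¹ := by rw [pow_two] at h6'; rw [h6']
  have hb : b = a⁻¹ * d := by rw [hd_def]; group
  -- b c b = a⁻¹ (d c d) (d⁻¹ a⁻¹ d)
  have step1 : a⁻¹ * (c⁻¹ * (d * a⁻¹ * d)) = c⁻¹ := by
    calc a⁻¹ * (c⁻¹ * (d * a⁻¹ * d))
        = a⁻¹ * ((d * c * d) * (d⁻¹ * a⁻¹ * d)) := by rw [hdcd, hdinv]
      _ = a⁻¹ * (d * c * ((d * d⁻¹) * a⁻¹ * d)) := by group
      _ = (a⁻¹ * d) * c * (a⁻¹ * d) := by group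
      _ = b * c * b := by rw [hb]
      _ = c⁻¹ := h4'
  have step2 : d * a⁻¹ * d = c * a * c⁻¹ := by
    have := congrArg (fun x => c * a * x) step1
    calc d * a⁻¹ * d = (c * (a * a⁻¹)) * (c⁻¹ * (d * a⁻¹ * d)) := by group
      _ = c * a * (a⁻¹ * (c⁻¹ * (d * a⁻¹ * d))) := by group
      _ = c * a * c⁻¹ := by rw [step1]
  have step3 : c * a * c⁻¹ = a⁻¹ * c⁻¹ * c⁻¹ := by
    calc c * a * c⁻¹ = (c * a * c) * (c⁻¹ * c⁻¹) := by group
      _ = a⁻¹ * c⁻¹ * c⁻¹ := by rw [h5']; group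
  have step4 : e = c⁻¹ * c⁻¹ := by
    calc e = a * (d * a⁻¹ * d) := by rw [he]; group
      _ = a * (c * a * c⁻¹) := by rw [step2]
      _ = a * (a⁻¹ * c⁻¹ * c⁻¹) := by rw [step3]
      _ = c⁻¹ * c⁻¹ := by group
  have hc : c = c⁻¹ ^ 4 := by
    calc c = e ^ 2 := h6'
      _ = (c⁻¹ * c⁻¹) ^ 2 := by rw [step4]
      _ = c⁻¹ ^ 4 := by group
  show c ^ 5 = 1
  calc c ^ 5 = (c⁻¹ ^ 4) * c ^ 4 := by rw [← hc]; group
    _ = 1 := by group
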